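/- Fix V ∈ M_{m×n}(ℂ) and an integer α ≥ 1. Consider the function φ : t ↦ tr( ( (I_m − t²VV*)^{-1} V (I_n − t²V*V)^{-1} V* )^α ) of a real variable t, defined for t in a neighborhood of 0 (its values are nonnegative real numbers). Then φ is twice differentiable at t = 0 and φ''(0) = 4α · tr( (VV*)^{α+1} ). -/

import Mathlib

open Matrix

/-- The second variation function
`φ(t) = tr(((I − t²VV*)⁻¹ V (I − t²V*V)⁻¹ V*)^α)` along the line `Z = tV`. -/
noncomputable def secondVariationFn (m n : ℕ) (V : Matrix (Fin m) (Fin n) ℂ) (α : ℕ)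
    (t : ℝ) : ℝ :=
  ((((1 - ((t : ℂ) ^ 2) • (V * Vᴴ))⁻¹ * V * (1 - ((t : ℂ) ^ 2) • (Vᴴ * V))⁻¹ * Vᴴ) ^ α).trace).re

section SVAux

attribute [local instance] Matrix.frobeniusNormedAddCommGroup Matrix.frobeniusNormedSpace
  Matrix.frobeniusNormedRing Matrix.frobeniusNormedAlgebra

/-- `re ∘ trace` as a continuous `ℝ`-linear map. -/
noncomputable def svReTraceCLM (m : ℕ) : Matrix (Fin m) (Fin m) ℂ →L[ℝ] ℝ :=
  Complex.reCLM.comp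
    (LinearMap.toContinuousLinearMap ((Matrix.traceLinearMap (Fin m) ℂ ℂ).restrictScalars ℝ))

lemma svReTraceCLM_apply {m : ℕ} (X : Matrix (Fin m) (Fin m) ℂ) :
    svReTraceCLM m X = X.trace.re := rfl

lemma sv_contDiffAt {m : ℕ} (A : Matrix (Fin m) (Fin m) ℂ) (α : ℕ) {s : ℝ}
    (hs : IsUnit (1 - (s : ℂ) • A)) :
    ContDiffAt ℝ 2 (fun s : ℝ =>
      ((((Ring.inverse (1 - (s : ℂ) • A)) ^ 2 * A) ^ α).trace).re) s := by
  have h0 : ContDiff ℝ 2 (fun s : ℝ => 1 - (s : ℂ) • A) := by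
    simp only [Complex.coe_smul]
    exact contDiff_const.sub (contDiff_id.smul contDiff_const)
  obtain ⟨u, hu⟩ := hs
  have h1 : ContDiffAt ℝ 2 (fun s : ℝ => Ring.inverse (1 - (s : ℂ) • A)) s := by
    have h := contDiffAt_ringInverse ℝ (n := 2) u
    rw [hu] at h
    exact h.comp s h0.contDiffAt
  have h2 : ContDiffAt ℝ 2 (fun s : ℝ => ((Ring.inverse (1 - (s : ℂ) • A)) ^ 2 * A) ^ α) s :=
    ((h1.pow 2).mul contDiffAt_const).pow α
  exact (svReTraceCLM m).contDiff.contDiffAt.comp s h2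

lemma sv_hasDerivAt {m : ℕ} (A : Matrix (Fin m) (Fin m) ℂ) (k : ℕ) :
    HasDerivAt (fun s : ℝ =>
        ((((Ring.inverse (1 - (s : ℂ) • A)) ^ 2 * A) ^ (k + 1)).trace).re)
      ((2 * (k + 1) : ℝ) * ((A ^ (k + 2)).trace).re) 0 := by
  have hw : HasDerivAt (fun s : ℝ => 1 - (s : ℂ) • A) (-A) 0 := by
    simp only [Complex.coe_smul]
    have := (((hasDerivAt_id (0 : ℝ)).smul_const A).const_sub 1)
    simp at this
    exact this
  have hw0 : (1 : Matrix (Fin m) (Fin m) ℂ) - ((0 : ℝ) : ℂ) • A = 1 := by simp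
  have hinv : HasDerivAt (fun s : ℝ => Ring.inverse (1 - (s : ℂ) • A)) A 0 := by
    have h1 := hasFDerivAt_ringInverse (𝕜 := ℝ) (1 : (Matrix (Fin m) (Fin m) ℂ)ˣ)
    have h1' : HasFDerivAt Ring.inverse
        (-ContinuousLinearMap.mulLeftRight ℝ (Matrix (Fin m) (Fin m) ℂ)
          ↑(1 : (Matrix (Fin m) (Fin m) ℂ)ˣ)⁻¹ ↑(1 : (Matrix (Fin m) (Fin m) ℂ)ˣ)⁻¹)
        ((fun s : ℝ => 1 - (s : ℂ) • A) 0) := by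
      simpa [hw0] using h1
    have h2 := h1'.comp_hasDerivAt 0 hw
    simp at h2
    exact h2
  have hsq : HasDerivAt (fun s : ℝ => (Ring.inverse (1 - (s : ℂ) • A)) ^ 2) (A + A) 0 := by
    have h := hinv.mul hinv
    simp only [pow_two]
    refine h.congr_deriv ?_
    simp [hw0]
  have hq : HasDerivAt (fun s : ℝ => (Ring.inverse (1 - (s : ℂ) • A)) ^ 2 * A)
      ((A + A) * A) 0 := hsq.mul_const A
  have hq0 : (Ring.inverse (1 - ((0 : ℝ) : ℂ) • A)) ^ 2 * A = A := by
    simp [hw0]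
  have hcomm : ∀ j : ℕ, A ^ j * ((A + A) * A) * A = A ^ (j + 1) * ((A + A) * A) := by
    intro j
    rw [pow_succ]
    simp only [add_mul, mul_add, mul_assoc]
  have key : ∀ k : ℕ,
      HasDerivAt (fun s : ℝ => ((Ring.inverse (1 - (s : ℂ) • A)) ^ 2 * A) ^ (k + 1))
        (((k : ℂ) + 1) • (A ^ k * ((A + A) * A))) 0 := by
    intro k
    induction k with
    | zero =>
      simpa using hq
    | succ k ih =>
      have h := ih.mul hq
      have hfun : (fun s : ℝ => ((Ring.inverse (1 - (s : ℂ) • A)) ^ 2 * A) ^ (k + 1) *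
          ((Ring.inverse (1 - (s : ℂ) • A)) ^ 2 * A)) =
          fun s : ℝ => ((Ring.inverse (1 - (s : ℂ) • A)) ^ 2 * A) ^ (k + 1 + 1) := by
        funext s
        rw [← pow_succ]
      simp only [Pi.mul_def] at h
      rw [hfun, hq0] at h
      refine h.congr_deriv (Eq.symm ?_)
      rw [smul_mul_assoc, hcomm k]
      have hc : ((k + 1 : ℕ) : ℂ) + 1 = ((k : ℂ) + 1) + 1 := by push_cast; ring
      rw [hc, add_smul, one_smul]
  have ht := (svReTraceCLM m).hasFDerivAt.comp_hasDerivAt 0 (key k)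
  have hval : svReTraceCLM m (((k : ℂ) + 1) • (A ^ k * ((A + A) * A))) =
      (2 * (k + 1) : ℝ) * ((A ^ (k + 2)).trace).re := by
    have hexp : A ^ k * ((A + A) * A) = A ^ (k + 2) + A ^ (k + 2) := by
      rw [add_mul, mul_add, pow_succ, pow_succ, mul_assoc]
    rw [svReTraceCLM_apply, hexp, trace_smul, trace_add]
    simp only [smul_eq_mul, Complex.mul_re, Complex.add_re, Complex.add_im]
    simp
    ring
  replace ht := ht.congr_deriv hval
  exact ht

lemma sv_matrix_eq {m n : ℕ} (V : Matrix (Fin m) (Fin n) ℂ) {z : ℂ}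
    (h1 : IsUnit (1 - z • (V * Vᴴ))) (h2 : IsUnit (1 - z • (Vᴴ * V))) :
    (1 - z • (V * Vᴴ))⁻¹ * V * (1 - z • (Vᴴ * V))⁻¹ * Vᴴ
      = (Ring.inverse (1 - z • (V * Vᴴ))) ^ 2 * (V * Vᴴ) := by
  set W1 := 1 - z • (V * Vᴴ) with hW1
  set W2 := 1 - z • (Vᴴ * V) with hW2
  have hd1 : IsUnit W1.det := (Matrix.isUnit_iff_isUnit_det _).mp h1
  have hd2 : IsUnit W2.det := (Matrix.isUnit_iff_isUnit_det _).mp h2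
  have hcomm : W1 * V = V * W2 := by
    rw [hW1, hW2]
    simp only [Matrix.sub_mul, Matrix.mul_sub, Matrix.one_mul, Matrix.mul_one,
      Matrix.smul_mul, Matrix.mul_smul, Matrix.mul_assoc]
  have key : V * W2⁻¹ = W1⁻¹ * V := by
    calc V * W2⁻¹ = W1⁻¹ * W1 * (V * W2⁻¹) := by rw [Matrix.nonsing_inv_mul W1 hd1, Matrix.one_mul]
    _ = W1⁻¹ * (W1 * V) * W2⁻¹ := by rw [Matrix.mul_assoc, Matrix.mul_assoc, Matrix.mul_assoc]
    _ = W1⁻¹ * (V * W2) * W2⁻¹ := by rw [hcomm]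
    _ = W1⁻¹ * (V * (W2 * W2⁻¹)) := by rw [Matrix.mul_assoc, Matrix.mul_assoc]
    _ = W1⁻¹ * V := by rw [Matrix.mul_nonsing_inv W2 hd2, Matrix.mul_one]
  calc W1⁻¹ * V * W2⁻¹ * Vᴴ = W1⁻¹ * (V * W2⁻¹) * Vᴴ := by rw [Matrix.mul_assoc W1⁻¹ V W2⁻¹]
  _ = W1⁻¹ * (W1⁻¹ * V) * Vᴴ := by rw [key]
  _ = W1⁻¹ * W1⁻¹ * (V * Vᴴ) := by simp only [Matrix.mul_assoc]
  _ = (Ring.inverse W1) ^ 2 * (V * Vᴴ) := by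
      rw [Matrix.nonsing_inv_eq_ringInverse, pow_two]

set_option maxHeartbeats 1000000 in
/-- `φ` is twice differentiable at `t = 0` and
`φ''(0) = 4α · tr((VV*)^{α+1})`. -/
theorem secondVariation_deriv2 (m n : ℕ) (V : Matrix (Fin m) (Fin n) ℂ)
    (α : ℕ) (hα : 1 ≤ α) :
    (∀ᶠ t in nhds (0 : ℝ), DifferentiableAt ℝ (secondVariationFn m n V α) t) ∧
    DifferentiableAt ℝ (deriv (secondVariationFn m n V α)) 0 ∧
    deriv (deriv (secondVariationFn m n V α)) 0 =
      4 * α * (((V * Vᴴ) ^ (α + 1)).trace).re := by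
  classical
  obtain ⟨k, rfl⟩ : ∃ k, α = k + 1 := ⟨α - 1, (Nat.succ_pred_eq_of_pos hα).symm⟩
  set A := V * Vᴴ with hA
  set B := Vᴴ * V with hB
  set h : ℝ → ℝ := fun s =>
    ((((Ring.inverse (1 - (s : ℂ) • A)) ^ 2 * A) ^ (k + 1)).trace).re with hh
  -- eventually, `1 - t² A` and `1 - t² B` are units
  have hevA : ∀ᶠ t : ℝ in nhds 0, ‖((t : ℂ) ^ 2) • A‖ < 1 := by
    have c1 : ContinuousAt (fun t : ℝ => ‖((t : ℂ) ^ 2) • A‖) 0 := by fun_prop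
    have h0 : ‖(((0 : ℝ) : ℂ) ^ 2) • A‖ < 1 := by norm_num
    exact c1.eventually_lt_const h0
  have hevB : ∀ᶠ t : ℝ in nhds 0, ‖((t : ℂ) ^ 2) • B‖ < 1 := by
    have c1 : ContinuousAt (fun t : ℝ => ‖((t : ℂ) ^ 2) • B‖) 0 := by fun_prop
    have h0 : ‖(((0 : ℝ) : ℂ) ^ 2) • B‖ < 1 := by norm_num
    exact c1.eventually_lt_const h0
  -- the key eventual equation : secondVariationFn = h ∘ (·^2)
  set sq : ℝ → ℝ := fun t => t ^ 2 with hsqdef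
  have heq : secondVariationFn m n V (k + 1) =ᶠ[nhds 0] h ∘ sq := by
    filter_upwards [hevA, hevB] with t h1 h2
    have hu1 : IsUnit (1 - ((t : ℂ) ^ 2) • A) := (Units.oneSub _ h1).isUnit
    have hu2 : IsUnit (1 - ((t : ℂ) ^ 2) • B) := (Units.oneSub _ h2).isUnit
    have hcast : ((t ^ 2 : ℝ) : ℂ) = (t : ℂ) ^ 2 := by push_cast; ring
    simp only [secondVariationFn, hh, hcast, hsqdef, Function.comp_apply]
    rw [sv_matrix_eq V hu1 hu2]
  -- units region for `h` itself
  have hevS : ∀ᶠ s : ℝ in nhds 0, IsUnit (1 - (s : ℂ) • A) := by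
    have c1 : ContinuousAt (fun s : ℝ => ‖(s : ℂ) • A‖) 0 := by fun_prop
    have h0 : ‖((0 : ℝ) : ℂ) • A‖ < 1 := by norm_num
    filter_upwards [c1.eventually_lt_const h0] with s hs
    exact (Units.oneSub _ hs).isUnit
  obtain ⟨ε, hε, hball⟩ := Metric.eventually_nhds_iff.mp hevS
  set S := Metric.ball (0 : ℝ) ε with hS
  have hS0 : (0 : ℝ) ∈ S := by simp [hS, hε]
  have hSmem : ∀ s ∈ S, IsUnit (1 - (s : ℂ) • A) := by
    intro s hs
    exact hball (Metric.mem_ball.mp hs)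
  have hcd : ContDiffOn ℝ 2 h S := fun s hs =>
    (sv_contDiffAt A (k + 1) (hSmem s hs)).contDiffWithinAt
  have hdiff : ∀ s ∈ S, DifferentiableAt ℝ h s := fun s hs =>
    (sv_contDiffAt A (k + 1) (hSmem s hs)).differentiableAt (by norm_num)
  have hd1 : ContDiffOn ℝ 1 (deriv h) S :=
    hcd.deriv_of_isOpen Metric.isOpen_ball (by norm_num)
  have hdh0 : DifferentiableAt ℝ (deriv h) 0 :=
    (hd1.differentiableOn one_ne_zero).differentiableAt (Metric.isOpen_ball.mem_nhds hS0)
  -- `t ↦ t ^ 2` tends to `0`, so eventually `t ^ 2 ∈ S`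
  have hsq_tendsto : Filter.Tendsto sq (nhds 0) (nhds 0) := by
    have := (continuous_pow 2 (M := ℝ)).tendsto 0
    simpa [hsqdef] using this
  have hev_sq : ∀ᶠ t : ℝ in nhds 0, sq t ∈ S :=
    hsq_tendsto.eventually_mem (Metric.isOpen_ball.mem_nhds hS0)
  -- Part 1 : eventual differentiability
  have part1 : ∀ᶠ t in nhds (0 : ℝ), DifferentiableAt ℝ (secondVariationFn m n V (k + 1)) t := by
    filter_upwards [hev_sq, heq.eventually_nhds] with t ht hteq
    have hsqd : DifferentiableAt ℝ sq t := by
      simp only [hsqdef]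
      exact (differentiable_pow 2).differentiableAt
    have hφ2 : DifferentiableAt ℝ (h ∘ sq) t :=
      DifferentiableAt.comp t (hdiff _ ht) hsqd
    exact hφ2.congr_of_eventuallyEq hteq
  -- formula for the derivative of `h ∘ (·^2)`
  have hderiv_formula : ∀ᶠ t : ℝ in nhds 0,
      deriv (h ∘ sq) t = deriv h (sq t) * (2 * t) := by
    filter_upwards [hev_sq] with t ht
    have hht : HasDerivAt h (deriv h (sq t)) (sq t) := (hdiff _ ht).hasDerivAt
    have hsq : HasDerivAt sq (2 * t) t := by
      simp only [hsqdef]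
      simpa using hasDerivAt_pow 2 t
    exact (HasDerivAt.comp t hht hsq).deriv
  have hderiv_eq : deriv (secondVariationFn m n V (k + 1)) =ᶠ[nhds 0]
      fun t => deriv h (sq t) * (2 * t) := heq.deriv.trans hderiv_formula
  -- the second-derivative computation
  have h02 : sq (0 : ℝ) = (0 : ℝ) := by simp [hsqdef]
  have hK : HasDerivAt (deriv h ∘ sq) (deriv (deriv h) 0 * (2 * 0)) 0 := by
    have hsq : HasDerivAt sq (2 * 0) 0 := by
      simp only [hsqdef]
      simpa using hasDerivAt_pow 2 (0 : ℝ)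
    exact HasDerivAt.comp_of_eq 0 hdh0.hasDerivAt hsq h02.symm
  have hlin : HasDerivAt (fun t : ℝ => 2 * t) 2 0 := by
    simpa using (hasDerivAt_id (0 : ℝ)).const_mul 2
  have hprod : HasDerivAt (fun t : ℝ => deriv h (sq t) * (2 * t))
      (deriv (deriv h) 0 * (2 * 0) * (2 * 0) + deriv h (sq 0) * 2) 0 :=
    HasDerivAt.mul (c := deriv h ∘ sq) hK hlin
  -- value of `deriv h 0`
  have hdh0val : deriv h 0 = (2 * (k + 1) : ℝ) * ((A ^ (k + 2)).trace).re :=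
    (sv_hasDerivAt A k).deriv
  constructor
  · exact part1
  constructor
  · exact hprod.differentiableAt.congr_of_eventuallyEq hderiv_eq
  · have e1 : deriv (deriv (secondVariationFn m n V (k + 1))) 0 =
        deriv (fun t : ℝ => deriv h (t ^ 2) * (2 * t)) 0 := hderiv_eq.deriv_eq
    rw [e1, hprod.deriv, h02, hdh0val]
    push_cast
    ring

end SVAux
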